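/- Let V be a finite type, E : V → V → Prop, W ≥ 0, w₁, w₂ : V → V → ℝ with 0 ≤ w_j(u,v) ≤ W whenever E u v (j = 1,2), and let r > 0. If there exists an infinite path π : ℕ → V (with E (π i) (π(i+1)) for all i) such that liminf_{k→∞} (1/k)·∑_{i<k} w₂(π(i), π(i+1)) − liminf_{k→∞} (1/k)·∑_{i<k} w₁(π(i), π(i+1)) ≥ r, then there exists a simple cycle v₀, …, v_{t−1} (t ≥ 1, pairwise distinct vertices, E v_i v_{(i+1) mod t} for all i < t) such that ∑_{i<t} w₂(v_i, v_{(i+1) mod t}) − ∑_{i<t} w₁(v_i, v_{(i+1) mod t}) ≥ r·t. -/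

import Mathlib

open Filter

section aux

variable {V : Type} [Fintype V] {E : V → V → Prop}

/-- Minimal repeat: any infinite sequence in a finite type has a repeat within
the first `card V + 1` terms; taking it minimal the segment is injective. -/
lemma walk_repeat (π : ℕ → V) :
    ∃ i j, i < j ∧ j ≤ Fintype.card V ∧ π i = π j ∧
      Set.InjOn π (Set.Ico i j) := by
  classical
  have hP : ∃ n, ∃ m < n, π m = π n := by
    obtain ⟨a, b, hne, hab⟩ := Fintype.exists_ne_map_eq_of_card_lt
      (fun m : Fin (Fintype.card V + 1) => π m) (by simp)
    rcases lt_or_gt_of_ne (fun h : (a:ℕ) = (b:ℕ) => hne (Fin.ext h)) with h' | h'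
    · exact ⟨b, a, h', hab⟩
    · exact ⟨a, b, h', hab.symm⟩
  set j := Nat.find hP with hj
  obtain ⟨i, hij, heq⟩ := Nat.find_spec hP
  refine ⟨i, j, hij, ?_, heq, ?_⟩
  · obtain ⟨a, b, hne, hab⟩ := Fintype.exists_ne_map_eq_of_card_lt
      (fun m : Fin (Fintype.card V + 1) => π m) (by simp)
    rcases lt_or_gt_of_ne (fun h : (a:ℕ) = (b:ℕ) => hne (Fin.ext h)) with h' | h'
    · exact le_trans (Nat.find_min' hP ⟨a, h', hab⟩) (Nat.lt_succ_iff.mp b.isLt)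
    · exact le_trans (Nat.find_min' hP ⟨b, h', hab.symm⟩) (Nat.lt_succ_iff.mp a.isLt)
  · intro a ha b hb hab
    by_contra hne
    rcases lt_or_gt_of_ne hne with h' | h'
    · exact Nat.find_min hP (m := b) hb.2 ⟨a, h', hab⟩
    · exact Nat.find_min hP (m := a) ha.2 ⟨b, h', hab.symm⟩

/-- From a repeat with injective interior, extract a simple cycle whose
cyclic sum of `g` equals the segment sum along the walk. -/
lemma cycle_of_repeat (π : ℕ → V) (hπ : ∀ n, E (π n) (π (n+1)))
    (g : V → V → ℝ) {i j : ℕ} (hij : i < j) (heq : π i = π j)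
    (hinj : Set.InjOn π (Set.Ico i j)) :
    ∃ (t : ℕ) (v : Fin (t+1) → V), Function.Injective v ∧
      (∀ m : Fin (t+1), E (v m) (v (m+1))) ∧
      t + 1 = j - i ∧
      ∑ m : Fin (t+1), g (v m) (v (m+1)) =
        ∑ m ∈ Finset.Ico i j, g (π m) (π (m+1)) := by
  classical
  set t := j - i - 1 with ht
  have htt : t + 1 = j - i := by omega
  set v : Fin (t+1) → V := fun m => π (i + m.val) with hv
  have hmem : ∀ m : Fin (t+1), i + m.val ∈ Set.Ico i j := by
    intro m
    have := m.isLt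
    constructor <;> omega
  have hvinj : Function.Injective v := by
    intro a b hab
    have := hinj (hmem a) (hmem b) hab
    exact Fin.ext (by omega)
  have hsucc : ∀ m : Fin (t+1), (m.val < t → (m+1).val = m.val + 1) ∧
      (m.val = t → (m+1).val = 0) := by
    intro m
    constructor <;> intro h <;>
      rw [Fin.val_add_one] <;> split_ifs with h' <;> simp only [Fin.ext_iff, Fin.val_last] at h' <;> omega
  have hedge : ∀ m : Fin (t+1), E (v m) (v (m+1)) := by
    intro m
    rcases lt_or_eq_of_le (Nat.lt_succ_iff.mp m.isLt) with h | h
    · have h1 := (hsucc m).1 h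
      have : v (m+1) = π (i + m.val + 1) := by
        simp only [hv, h1]; ring_nf
      rw [this]
      exact hπ _
    · have h1 := (hsucc m).2 h
      have hvm1 : v (m+1) = π j := by
        simp only [hv, h1]
        simpa using heq
      have hvm : v m = π (i + t) := by simp [hv, h]
      have hit : i + t + 1 = j := by omega
      rw [hvm1, hvm, ← hit]
      exact hπ _
  refine ⟨t, v, hvinj, hedge, htt, ?_⟩
  have hsum1 : ∑ m : Fin (t+1), g (v m) (v (m+1)) =
      (∑ m : Fin t, g (v m.castSucc) (v (m.castSucc+1))) +
        g (v (Fin.last t)) (v (Fin.last t + 1)) := by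
    rw [Fin.sum_univ_castSucc]
  have hterm : ∀ m : Fin t, g (v m.castSucc) (v (m.castSucc+1)) =
      g (π (i + m.val)) (π (i + m.val + 1)) := by
    intro m
    have h1 := (hsucc m.castSucc).1 (by simpa using m.isLt)
    simp only [hv, h1, Fin.coe_castSucc]
    ring_nf
  have hlast : g (v (Fin.last t)) (v (Fin.last t + 1)) =
      g (π (i + t)) (π (i + t + 1)) := by
    have h1 := (hsucc (Fin.last t)).2 rfl
    have hit : i + t + 1 = j := by omega
    simp only [hv, h1, Fin.val_last]
    rw [hit, ← heq]
    simp
  rw [hsum1, hlast]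
  have hIco : ∑ m ∈ Finset.Ico i j, g (π m) (π (m+1)) =
      ∑ m ∈ Finset.range (j - i), g (π (i + m)) (π (i + m + 1)) := by
    rw [Finset.sum_Ico_eq_sum_range]
  rw [hIco, ← htt, Finset.sum_range_succ]
  congr 1
  rw [Finset.sum_congr rfl (fun m (_ : m ∈ Finset.univ) => hterm m)]
  exact Fin.sum_univ_eq_sum_range (fun m => g (π (i + m)) (π (i + m + 1))) t


/-- Cycle-decomposition bound: if every simple cycle has `g`-sum at most
`ρ * (length)`, then every walk of length `k` has `g`-sum at most
`ρ * k + card V * (W + |ρ|)`. -/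
lemma decomp (g : V → V → ℝ) (W ρ : ℝ) (hW : 0 ≤ W)
    (hgW : ∀ u v, E u v → g u v ≤ W)
    (hρ : ∀ (t : ℕ) (v : Fin (t+1) → V), Function.Injective v →
      (∀ m : Fin (t+1), E (v m) (v (m+1))) →
      ∑ m : Fin (t+1), g (v m) (v (m+1)) ≤ ρ * (t+1)) :
    ∀ k (π : ℕ → V), (∀ n, E (π n) (π (n+1))) →
      ∑ m ∈ Finset.range k, g (π m) (π (m+1)) ≤
        ρ * k + (Fintype.card V) * (W + |ρ|) := by
  intro k
  induction k using Nat.strong_induction_on with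
  | _ k IH =>
  intro π hπ
  by_cases hk : k ≤ Fintype.card V
  · have h1 : ∑ m ∈ Finset.range k, g (π m) (π (m+1)) ≤ (k : ℝ) * W := by
      calc ∑ m ∈ Finset.range k, g (π m) (π (m+1))
          ≤ ∑ _m ∈ Finset.range k, W :=
            Finset.sum_le_sum (fun m _ => hgW _ _ (hπ m))
        _ = (k : ℝ) * W := by simp [mul_comm]
    have hkN : (k : ℝ) ≤ Fintype.card V := by exact_mod_cast hk
    nlinarith [abs_nonneg ρ, neg_abs_le ρ, le_abs_self ρ, Nat.cast_nonneg (α := ℝ) k]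
  · push_neg at hk
    obtain ⟨i, j, hij, hjcard, heq, hinj⟩ := walk_repeat π
    obtain ⟨t, v, hvinj, hed, htt, hsum⟩ := cycle_of_repeat π hπ g hij heq hinj
    set ℓ := j - i with hℓ
    have hℓ1 : 1 ≤ ℓ := by omega
    have hjk : j < k := lt_of_le_of_lt hjcard hk
    set π' : ℕ → V := fun n => if n < i then π n else π (n + ℓ) with hπ'def
    have hπi : π (i + ℓ) = π i := by rw [show i + ℓ = j by omega, ← heq]
    have hπ' : ∀ n, E (π' n) (π' (n+1)) := by
      intro n
      by_cases h1 : n + 1 < i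
      · simp only [hπ'def]
        rw [if_pos (by omega), if_pos h1]
        exact hπ n
      · by_cases h2 : n < i
        · have hni : n + 1 = i := by omega
          simp only [hπ'def]
          rw [if_pos h2, if_neg (by omega), hni, hπi, ← hni]
          exact hπ n
        · simp only [hπ'def]
          rw [if_neg h2, if_neg (by omega), show n + 1 + ℓ = n + ℓ + 1 by ring]
          exact hπ _
    have hkl : k - ℓ < k := by omega
    have IH' := IH (k - ℓ) hkl π' hπ'
    -- rewrite the sum for π'
    have hik : i ≤ k - ℓ := by omega
    have hsplit' : ∑ m ∈ Finset.range (k - ℓ), g (π' m) (π' (m+1)) =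
        (∑ m ∈ Finset.range i, g (π m) (π (m+1))) +
          ∑ m ∈ Finset.Ico j k, g (π m) (π (m+1)) := by
      rw [Finset.range_eq_Ico, ← Finset.sum_Ico_consecutive _ (Nat.zero_le i) hik,
        ← Finset.range_eq_Ico]
      congr 1
      · apply Finset.sum_congr rfl
        intro m hm
        have hmi : m < i := Finset.mem_range.mp hm
        by_cases h1 : m + 1 < i
        · simp only [hπ'def]; rw [if_pos hmi, if_pos h1]
        · have hmi1 : m + 1 = i := by omega
          simp only [hπ'def]
          rw [if_pos hmi, if_neg (by omega), hmi1, hπi]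
      · have e1 : ∀ m ∈ Finset.Ico i (k - ℓ), g (π' m) (π' (m+1)) =
            g (π (m + ℓ)) (π (m + ℓ + 1)) := by
          intro m hm
          have := Finset.mem_Ico.mp hm
          simp only [hπ'def]
          rw [if_neg (by omega), if_neg (by omega),
            show m + 1 + ℓ = m + ℓ + 1 by ring]
        rw [Finset.sum_congr rfl e1, Finset.sum_Ico_eq_sum_range,
          Finset.sum_Ico_eq_sum_range]
        apply Finset.sum_congr (by congr 1 <;> omega)
        intro m _
        congr 2 <;> omega
    have hsplit : ∑ m ∈ Finset.range k, g (π m) (π (m+1)) =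
        (∑ m ∈ Finset.range i, g (π m) (π (m+1))) +
          (∑ m ∈ Finset.Ico i j, g (π m) (π (m+1))) +
          ∑ m ∈ Finset.Ico j k, g (π m) (π (m+1)) := by
      rw [Finset.range_eq_Ico,
        ← Finset.sum_Ico_consecutive _ (Nat.zero_le j) (le_of_lt hjk),
        ← Finset.sum_Ico_consecutive _ (Nat.zero_le i) (le_of_lt hij),
        ← Finset.range_eq_Ico]
    have hcyc : ∑ m ∈ Finset.Ico i j, g (π m) (π (m+1)) ≤ ρ * ℓ := by
      rw [← hsum]
      have := hρ t v hvinj hed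
      have hc : ((t : ℝ) + 1) = (ℓ : ℝ) := by exact_mod_cast htt
      rw [hc] at this
      exact this
    have hcast : ((k - ℓ : ℕ) : ℝ) = (k : ℝ) - ℓ := by
      rw [Nat.cast_sub (by omega)]
    rw [hsplit]
    rw [hsplit'] at IH'
    rw [hcast] at IH'
    nlinarith [hcyc]

end aux

theorem exists_cycle_of_liminf_gap {V : Type} [Fintype V] (E : V → V → Prop)
    (W : ℝ) (hW : 0 ≤ W) (w₁ w₂ : V → V → ℝ)
    (hw₁ : ∀ u v, E u v → 0 ≤ w₁ u v ∧ w₁ u v ≤ W)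
    (hw₂ : ∀ u v, E u v → 0 ≤ w₂ u v ∧ w₂ u v ≤ W)
    (r : ℝ) (hr : 0 < r)
    (hpath : ∃ π : ℕ → V, (∀ i, E (π i) (π (i + 1))) ∧
      Filter.liminf
          (fun k : ℕ => (∑ i ∈ Finset.range k, w₂ (π i) (π (i + 1))) / k) atTop -
        Filter.liminf
          (fun k : ℕ => (∑ i ∈ Finset.range k, w₁ (π i) (π (i + 1))) / k) atTop
        ≥ r) :
    ∃ (t : ℕ) (v : Fin (t + 1) → V), Function.Injective v ∧
      (∀ i : Fin (t + 1), E (v i) (v (i + 1))) ∧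
      ∑ i : Fin (t + 1), w₂ (v i) (v (i + 1)) -
          ∑ i : Fin (t + 1), w₁ (v i) (v (i + 1)) ≥ r * (t + 1) := by
  classical
  obtain ⟨π, hπ, hlim⟩ := hpath
  by_contra hcon
  push_neg at hcon
  set g : V → V → ℝ := fun u v => w₂ u v - w₁ u v with hg
  have hgsum : ∀ (t : ℕ) (v : Fin (t+1) → V),
      ∑ m : Fin (t+1), g (v m) (v (m+1)) =
        ∑ m : Fin (t+1), w₂ (v m) (v (m+1)) -
          ∑ m : Fin (t+1), w₁ (v m) (v (m+1)) := by
    intro t v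
    simp [hg, Finset.sum_sub_distrib]
  set A : Set ℝ := {x | ∃ (t : ℕ) (v : Fin (t+1) → V), Function.Injective v ∧
      (∀ m : Fin (t+1), E (v m) (v (m+1))) ∧
      x = (∑ m : Fin (t+1), g (v m) (v (m+1))) / (t+1)} with hA
  have hAfin : A.Finite := by
    have hsub : A ⊆ ⋃ t ∈ Set.Iio (Fintype.card V),
        Set.range (fun v : Fin (t+1) → V =>
          (∑ m : Fin (t+1), g (v m) (v (m+1))) / (t+1)) := by
      rintro x ⟨t, v, hvinj, hed, rfl⟩
      have htc : t + 1 ≤ Fintype.card V := by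
        simpa using Fintype.card_le_of_injective v hvinj
      exact Set.mem_biUnion (show t ∈ Set.Iio (Fintype.card V) by
        simp; omega) ⟨v, rfl⟩
    exact Set.Finite.subset ((Set.finite_Iio _).biUnion
      (fun t _ => Set.finite_range _)) hsub
  have hAne : A.Nonempty := by
    obtain ⟨i, j, hij, _, heq, hinj⟩ := walk_repeat π
    obtain ⟨t, v, hvinj, hed, _, _⟩ := cycle_of_repeat π hπ g hij heq hinj
    exact ⟨_, t, v, hvinj, hed, rfl⟩
  have hsne : hAfin.toFinset.Nonempty := by
    rwa [Set.Finite.toFinset_nonempty]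
  set ρ := hAfin.toFinset.max' hsne with hρdef
  have hρA : ρ ∈ A := by
    have := hAfin.toFinset.max'_mem hsne
    rwa [Set.Finite.mem_toFinset] at this
  have hρlt : ρ < r := by
    obtain ⟨t, v, hvinj, hed, hx⟩ := hρA
    have hpos : (0:ℝ) < (t:ℝ)+1 := by positivity
    rw [hx, div_lt_iff₀ hpos, hgsum t v]
    exact hcon t v hvinj hed
  have hρbound : ∀ (t : ℕ) (v : Fin (t+1) → V), Function.Injective v →
      (∀ m : Fin (t+1), E (v m) (v (m+1))) →
      ∑ m : Fin (t+1), g (v m) (v (m+1)) ≤ ρ * (t+1) := by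
    intro t v hvinj hed
    have hle : (∑ m : Fin (t+1), g (v m) (v (m+1)))/((t:ℝ)+1) ≤ ρ :=
      hAfin.toFinset.le_max' _ (by
        rw [Set.Finite.mem_toFinset]; exact ⟨t, v, hvinj, hed, rfl⟩)
    have hpos : (0:ℝ) < (t:ℝ)+1 := by positivity
    rw [div_le_iff₀ hpos] at hle
    linarith
  have hgW : ∀ u v, E u v → g u v ≤ W := by
    intro u v huv
    have h1 := (hw₁ u v huv).1
    have h2 := (hw₂ u v huv).2
    simp only [hg]; linarith
  have hdec := decomp (E := E) g W ρ hW hgW hρbound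
  set B : ℝ := (Fintype.card V) * (W + |ρ|) with hB
  set A1 : ℕ → ℝ := fun k => (∑ i ∈ Finset.range k, w₁ (π i) (π (i + 1))) / k
    with hA1
  set A2 : ℕ → ℝ := fun k => (∑ i ∈ Finset.range k, w₂ (π i) (π (i + 1))) / k
    with hA2
  -- bounds on the averages
  have hbnd : ∀ (w : V → V → ℝ), (∀ u v, E u v → 0 ≤ w u v ∧ w u v ≤ W) →
      ∀ k : ℕ, 0 ≤ (∑ i ∈ Finset.range k, w (π i) (π (i + 1))) / k ∧
        (∑ i ∈ Finset.range k, w (π i) (π (i + 1))) / k ≤ W := by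
    intro w hw k
    have h0 : (0:ℝ) ≤ ∑ i ∈ Finset.range k, w (π i) (π (i + 1)) :=
      Finset.sum_nonneg (fun i _ => (hw _ _ (hπ i)).1)
    have h1 : ∑ i ∈ Finset.range k, w (π i) (π (i + 1)) ≤ (k:ℝ) * W := by
      calc ∑ i ∈ Finset.range k, w (π i) (π (i + 1))
          ≤ ∑ _i ∈ Finset.range k, W :=
            Finset.sum_le_sum (fun i _ => (hw _ _ (hπ i)).2)
        _ = (k:ℝ) * W := by simp [mul_comm]
    rcases Nat.eq_zero_or_pos k with hk | hk
    · subst hk; simp [hW]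
    · have hkp : (0:ℝ) < k := by exact_mod_cast hk
      exact ⟨div_nonneg h0 (le_of_lt hkp), by rw [div_le_iff₀ hkp]; linarith⟩
  have hbnd1 := hbnd w₁ hw₁
  have hbnd2 := hbnd w₂ hw₂
  set a := Filter.liminf A1 atTop with ha
  set b := Filter.liminf A2 atTop with hb
  have hab : b - a ≥ r := hlim
  set ε : ℝ := (r - ρ)/3 with hε
  have hεpos : 0 < ε := by simp only [hε]; linarith
  -- eventually A2 k > a + r - ε
  have hEv2 : ∀ᶠ k in atTop, a + r - ε < A2 k := by
    exact eventually_lt_of_lt_liminf (by rw [← hb]; linarith)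
      (isBoundedUnder_of ⟨0, fun k => (hbnd2 k).1⟩)
  -- frequently A1 k < a + ε
  have hFr1 : ∃ᶠ k in atTop, A1 k < a + ε := by
    exact frequently_lt_of_liminf_lt
      ((isBoundedUnder_of ⟨W, fun k => (hbnd1 k).2⟩ :
        Filter.IsBoundedUnder (· ≤ ·) atTop A1).isCoboundedUnder_ge)
      (by rw [← ha]; linarith)
  -- eventually A2 k - A1 k ≤ ρ + ε
  have hEvD : ∀ᶠ k in atTop, A2 k - A1 k ≤ ρ + ε := by
    have htend : Filter.Tendsto (fun k : ℕ => B / k) atTop (nhds 0) :=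
      tendsto_const_div_atTop_nhds_zero_nat B
    have hev : ∀ᶠ k : ℕ in atTop, B / (k:ℝ) < ε :=
      htend.eventually_lt_const hεpos
    filter_upwards [hev, Filter.eventually_ge_atTop 1] with k hk hk1
    have hkp : (0:ℝ) < k := by exact_mod_cast hk1
    have hsum := hdec k π hπ
    have hDk : A2 k - A1 k = (∑ m ∈ Finset.range k, g (π m) (π (m+1))) / k := by
      simp only [hA1, hA2, hg, Finset.sum_sub_distrib, sub_div]
    rw [hDk]
    rw [div_le_iff₀ hkp]
    calc ∑ m ∈ Finset.range k, g (π m) (π (m+1)) ≤ ρ * k + B := hsum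
      _ ≤ (ρ + ε) * k := by
        have : B < ε * k := by rwa [div_lt_iff₀ hkp] at hk
        nlinarith
  have hcomb := hFr1.and_eventually (hEv2.and hEvD)
  obtain ⟨k, hk1, hk2, hk3⟩ := hcomb.exists
  have : ρ + ε < A2 k - A1 k := by simp only [hε] at *; linarith
  linarith
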